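/- For every integer d ≥ 1 and p ≥ 1, the binomial coefficient C(p+d, d) satisfies C(p+d,d) ≤ d^p (e/p)^p exp(p²/d). -/

import Mathlib

/-- For every integer `d ≥ 1` and `p ≥ 1`, the binomial coefficient `C(p+d, d)` satisfies
`C(p+d,d) ≤ d^p (e/p)^p exp(p²/d)`. -/
theorem choose_le_bound (p d : ℕ) (hp : 1 ≤ p) (hd : 1 ≤ d) :
    ((p + d).choose d : ℝ) ≤
      (d : ℝ) ^ p * (Real.exp 1 / p) ^ p * Real.exp ((p : ℝ) ^ 2 / d) := by
  have hp0 : (0 : ℝ) < p := by exact_mod_cast hp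
  have hd0 : (0 : ℝ) < d := by exact_mod_cast hd
  have hfac : (0 : ℝ) < (p.factorial : ℝ) := by exact_mod_cast p.factorial_pos
  -- choose bound
  have h1 : ((p + d).choose d : ℝ) ≤ ((p + d : ℕ) : ℝ) ^ p / p.factorial := by
    rw [← Nat.choose_symm_add]
    exact_mod_cast Nat.choose_le_pow_div p (p + d) (α := ℝ)
  -- 1/p! ≤ (e/p)^p
  have h2 : (1 : ℝ) / p.factorial ≤ (Real.exp 1 / p) ^ p := by
    have := Real.pow_div_factorial_le_exp (x := (p : ℝ)) hp0.le p
    rw [div_pow, Real.exp_one_pow, div_le_div_iff₀ hfac (by positivity), one_mul]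
    rw [div_le_iff₀ hfac] at this
    exact this
  -- (p+d)^p ≤ d^p exp(p²/d)
  have h3 : ((p + d : ℕ) : ℝ) ^ p ≤ (d : ℝ) ^ p * Real.exp ((p : ℝ) ^ 2 / d) := by
    have hb : ((p + d : ℕ) : ℝ) ≤ (d : ℝ) * Real.exp ((p : ℝ) / d) := by
      have := Real.add_one_le_exp ((p : ℝ) / d)
      calc ((p + d : ℕ) : ℝ) = (d : ℝ) * ((p : ℝ) / d + 1) := by
            push_cast; field_simp
        _ ≤ (d : ℝ) * Real.exp ((p : ℝ) / d) := by
            exact mul_le_mul_of_nonneg_left this hd0.le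
    calc ((p + d : ℕ) : ℝ) ^ p ≤ ((d : ℝ) * Real.exp ((p : ℝ) / d)) ^ p := by
          apply pow_le_pow_left₀ (by positivity) hb
      _ = (d : ℝ) ^ p * Real.exp ((p : ℝ) ^ 2 / d) := by
          rw [mul_pow, ← Real.exp_nat_mul]
          congr 2
          field_simp
  calc ((p + d).choose d : ℝ) ≤ ((p + d : ℕ) : ℝ) ^ p / p.factorial := h1
    _ = ((p + d : ℕ) : ℝ) ^ p * (1 / p.factorial) := by ring
    _ ≤ ((d : ℝ) ^ p * Real.exp ((p : ℝ) ^ 2 / d)) * (Real.exp 1 / p) ^ p := by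
        apply mul_le_mul h3 h2 (by positivity) (by positivity)
    _ = (d : ℝ) ^ p * (Real.exp 1 / p) ^ p * Real.exp ((p : ℝ) ^ 2 / d) := by ring
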